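/- The set of perfect powers, X := { a^n : a ∈ ℕ, n ∈ ℕ, n ≥ 2 }, is small. -/

import Mathlib

open Set Filter Topology

/-- An upper quasi-density on ℕ. -/
def IsUpperQuasiDensity (μ : Set ℕ → ℝ) : Prop :=
  μ Set.univ = 1 ∧
  (∀ X : Set ℕ, μ X ≤ 1) ∧
  (∀ X Y : Set ℕ, μ (X ∪ Y) ≤ μ X + μ Y) ∧
  (∀ (X : Set ℕ) (k : ℕ), 0 < k → μ ((fun x => k * x) '' X) = μ X / k) ∧
  (∀ (X : Set ℕ) (h : ℕ), μ ((fun x => x + h) '' X) = μ X)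

/-- An upper density on ℕ: a monotone upper quasi-density. -/
def IsUpperDensity (μ : Set ℕ → ℝ) : Prop :=
  IsUpperQuasiDensity μ ∧ ∀ X Y : Set ℕ, X ⊆ Y → μ X ≤ μ Y

/-- A set of naturals is small if every upper quasi-density vanishes on it. -/
def SmallSet (X : Set ℕ) : Prop :=
  ∀ μ : Set ℕ → ℝ, IsUpperQuasiDensity μ → μ X = 0

/-- The upper asymptotic density of a set of naturals. -/
noncomputable def upperAsymptoticDensity (X : Set ℕ) : ℝ :=
  limsup (fun n : ℕ => ((X ∩ Set.Icc 1 n).ncard : ℝ) / n) atTop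

/-- The arithmetic progression k·ℕ + h. -/
def AP (k h : ℕ) : Set ℕ := {x : ℕ | ∃ m : ℕ, x = k * m + h}

/-- A finite union of arithmetic progressions of ℕ. -/
def IsFinUnionAP (A : Set ℕ) : Prop :=
  ∃ s : Finset (ℕ × ℕ), (∀ p ∈ s, 0 < p.1) ∧ A = ⋃ p ∈ s, AP p.1 p.2

/-- The upper Buck density of a set of naturals. -/
noncomputable def buckDensity (X : Set ℕ) : ℝ :=
  sInf {d : ℝ | ∃ A : Set ℕ, IsFinUnionAP A ∧ X ⊆ A ∧ d = upperAsymptoticDensity A}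

/-- `rk k X` is the number of residues h ∈ [0, k-1] with X ∩ (k·ℕ + h) ≠ ∅. -/
noncomputable def rk (k : ℕ) (X : Set ℕ) : ℕ :=
  {h : ℕ | h < k ∧ (X ∩ AP k h).Nonempty}.ncard

/-- `wk μ k S` is the number of residues h ∈ [0, k-1] with μ(S ∩ (k·ℕ + h)) ≠ 0. -/
noncomputable def wk (μ : Set ℕ → ℝ) (k : ℕ) (S : Set ℕ) : ℕ :=
  {h : ℕ | h < k ∧ μ (S ∩ AP k h) ≠ 0}.ncard

lemma uqd_empty {μ} (hμ : IsUpperQuasiDensity μ) : μ ∅ = 0 := by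
  obtain ⟨-, -, -, hscale, -⟩ := hμ
  have := hscale ∅ 2 (by norm_num)
  simp only [Set.image_empty] at this
  linarith

lemma uqd_subset_AP {μ} (hμ : IsUpperQuasiDensity μ) {Y : Set ℕ} {k h : ℕ}
    (hk : 0 < k) (hY : Y ⊆ AP k h) : μ Y ≤ 1 / k := by
  obtain ⟨-, hle, -, hscale, hshift⟩ := hμ
  set Z : Set ℕ := {m | k * m + h ∈ Y} with hZ
  have him : Y = (fun x => x + h) '' ((fun x => k * x) '' Z) := by
    ext y
    simp only [Set.mem_image, hZ, Set.mem_setOf_eq]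
    constructor
    · intro hy
      obtain ⟨m, rfl⟩ := hY hy
      exact ⟨k * m, ⟨m, hy, rfl⟩, rfl⟩
    · rintro ⟨-, ⟨m, hm, rfl⟩, rfl⟩
      exact hm
  rw [him, hshift, hscale _ _ hk]
  have h1 : μ Z ≤ 1 := hle Z
  have h2 : (0:ℝ) < k := by exact_mod_cast hk
  gcongr

lemma uqd_biUnion {μ} (hμ : IsUpperQuasiDensity μ) (s : Finset ℕ) (Y : ℕ → Set ℕ) :
    μ (⋃ i ∈ s, Y i) ≤ ∑ i ∈ s, μ (Y i) := by
  classical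
  induction s using Finset.cons_induction with
  | empty => simpa using le_of_eq (uqd_empty hμ)
  | cons a s ha ih =>
      rw [Finset.cons_eq_insert, Finset.set_biUnion_insert, Finset.sum_insert ha]
      exact le_trans (hμ.2.2.1 _ _) (by linarith)

lemma uqd_nonneg {μ} (hμ : IsUpperQuasiDensity μ) (X : Set ℕ) : 0 ≤ μ X := by
  obtain ⟨huniv, hle, hsub, -, -⟩ := hμ
  have h1 : μ (X ∪ Xᶜ) ≤ μ X + μ Xᶜ := hsub X Xᶜ
  rw [Set.union_compl_self] at h1
  have := hle Xᶜ
  linarith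

lemma AP_one_zero : AP 1 0 = Set.univ := by
  ext x; simp [AP]

lemma AP_decomp (K h n : ℕ) (hn : 0 < n) :
    AP K h = ⋃ t ∈ Finset.range n, AP (K * n) (h + K * t) := by
  ext x
  simp only [Set.mem_iUnion, Finset.mem_range, AP, Set.mem_setOf_eq]
  constructor
  · rintro ⟨m, rfl⟩
    refine ⟨m % n, Nat.mod_lt _ hn, m / n, ?_⟩
    have : n * (m / n) + m % n = m := Nat.div_add_mod m n
    calc K * m + h = K * (n * (m / n) + m % n) + h := by rw [this]
    _ = K * n * (m / n) + (h + K * (m % n)) := by ring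
  · rintro ⟨t, ht, m, rfl⟩
    exact ⟨n * m + t, by ring⟩

lemma pp_sq_dvd {x p : ℕ} (hp : p.Prime) (hx : ∃ a n : ℕ, 2 ≤ n ∧ x = a ^ n)
    (hdvd : p ∣ x) : p ^ 2 ∣ x := by
  obtain ⟨a, n, hn, rfl⟩ := hx
  have hpa : p ∣ a := hp.dvd_of_dvd_pow hdvd
  calc p ^ 2 ∣ a ^ 2 := pow_dvd_pow_of_dvd hpa 2
  _ ∣ a ^ n := pow_dvd_pow a hn

lemma piece_empty {K h p : ℕ} (hp : p.Prime) (h1 : p ∣ h) (h2 : ¬ p ^ 2 ∣ h) :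
    {x : ℕ | ∃ a n : ℕ, 2 ≤ n ∧ x = a ^ n} ∩ AP (K * p ^ 2) h = ∅ := by
  ext x
  simp only [Set.mem_inter_iff, Set.mem_empty_iff_false, iff_false, not_and, AP,
    Set.mem_setOf_eq]
  rintro hx ⟨m, rfl⟩
  apply h2
  have hdx : p ∣ K * p ^ 2 * m + h :=
    Dvd.dvd.add (Dvd.dvd.mul_right (Dvd.dvd.mul_left (dvd_pow_self p two_ne_zero) K) m) h1
  have := pp_sq_dvd hp hx hdx
  have h3 : p ^ 2 ∣ K * p ^ 2 * m := Dvd.dvd.mul_right (Dvd.dvd.mul_left dvd_rfl K) m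
  have h4 := Nat.dvd_sub this h3
  simpa using h4

lemma exists_t0 {p K h : ℕ} (hp : p.Prime) (hK : ¬ p ∣ K) :
    ∃ t₀ < p, p ∣ h + K * t₀ := by
  haveI : Fact p.Prime := ⟨hp⟩
  set u : ZMod p := (-(h : ZMod p)) * (K : ZMod p)⁻¹ with hu
  refine ⟨u.val, u.val_lt, ?_⟩
  rw [← ZMod.natCast_eq_zero_iff]
  push_cast
  rw [ZMod.natCast_zmod_val, hu]
  have hK0 : (K : ZMod p) ≠ 0 := by
    rwa [Ne, ZMod.natCast_eq_zero_iff]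
  field_simp
  ring

lemma card_good {p K h : ℕ} (hp : p.Prime) (hK : ¬ p ∣ K) :
    (((Finset.range (p ^ 2)).filter
      (fun t => ¬(p ∣ (h + K * t) ∧ ¬ p ^ 2 ∣ (h + K * t)))).card : ℝ)
      ≤ (p : ℝ) ^ 2 - p + 1 := by
  classical
  obtain ⟨t₀, ht₀p, ht₀⟩ := exists_t0 hp hK (h := h)
  have hp2 : 2 ≤ p := hp.two_le
  set B : ℕ → Prop := fun t => p ∣ (h + K * t) ∧ ¬ p ^ 2 ∣ (h + K * t) with hB
  set cands : Finset ℕ := (Finset.range p).image (fun j => t₀ + j * p) with hcands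
  have hcand_card : cands.card = p := by
    rw [hcands, Finset.card_image_of_injective _
      (fun a b hab => Nat.eq_of_mul_eq_mul_right hp.pos (by omega)), Finset.card_range]
  have hcand_sub : cands ⊆ Finset.range (p ^ 2) := by
    intro t ht
    rw [hcands] at ht
    simp only [Finset.mem_image, Finset.mem_range] at ht ⊢
    obtain ⟨j, hj, rfl⟩ := ht
    nlinarith
  have hcand_dvd : ∀ t ∈ cands, p ∣ h + K * t := by
    intro t ht
    rw [hcands] at ht
    simp only [Finset.mem_image, Finset.mem_range] at ht
    obtain ⟨j, hj, rfl⟩ := ht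
    have : h + K * (t₀ + j * p) = (h + K * t₀) + (K * j) * p := by ring
    rw [this]
    exact Nat.dvd_add ht₀ (Dvd.dvd.mul_left dvd_rfl (K * j))
  -- at most one candidate is divisible by p^2
  have hcop : Nat.Coprime (p ^ 2) K :=
    Nat.Coprime.pow_left 2 ((Nat.Prime.coprime_iff_not_dvd hp).mpr hK)
  have hsub2 : (cands.filter (fun t => p ^ 2 ∣ h + K * t)).card ≤ 1 := by
    rw [Finset.card_le_one]
    have key : ∀ a b, a ∈ cands → b ∈ cands → p ^ 2 ∣ h + K * a → p ^ 2 ∣ h + K * b →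
        a ≤ b → a = b := by
      intro a b hca hcb hda hdb hle
      have d1 : p ^ 2 ∣ (h + K * b) - (h + K * a) := Nat.dvd_sub hdb hda
      have e1 : (h + K * b) - (h + K * a) = K * (b - a) := by
        rw [Nat.mul_sub]; omega
      rw [e1] at d1
      have d2 : p ^ 2 ∣ b - a := hcop.dvd_of_dvd_mul_left d1
      have hbb : b < p ^ 2 := Finset.mem_range.mp (hcand_sub hcb)
      rcases Nat.eq_zero_or_pos (b - a) with h0 | h0
      · omega
      · have := Nat.le_of_dvd h0 d2; omega
    intro a ha b hb
    simp only [Finset.mem_filter] at ha hb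
    rcases le_total a b with hle | hle
    · exact key a b ha.1 hb.1 ha.2 hb.2 hle
    · exact (key b a hb.1 ha.1 hb.2 ha.2 hle).symm
  have hbadsub : cands.filter (fun t => ¬ p ^ 2 ∣ h + K * t)
      ⊆ (Finset.range (p ^ 2)).filter B := by
    intro t ht
    simp only [Finset.mem_filter, hB] at ht ⊢
    exact ⟨hcand_sub ht.1, hcand_dvd t ht.1, ht.2⟩
  have hbadcard : p - 1 ≤ ((Finset.range (p ^ 2)).filter B).card := by
    have h6 := Finset.card_filter_add_card_filter_not
      (s := cands) (p := fun t => p ^ 2 ∣ h + K * t)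
    have h7 := Finset.card_le_card hbadsub
    omega
  have htot := Finset.card_filter_add_card_filter_not
    (s := Finset.range (p ^ 2)) (p := B)
  rw [Finset.card_range] at htot
  have : ((Finset.range (p ^ 2)).filter (fun t => ¬ B t)).card ≤ p ^ 2 - (p - 1) := by
    omega
  calc (((Finset.range (p ^ 2)).filter (fun t => ¬ B t)).card : ℝ)
      ≤ ((p ^ 2 - (p - 1) : ℕ) : ℝ) := by exact_mod_cast this
    _ = (p : ℝ) ^ 2 - p + 1 := by
        have : p - 1 ≤ p ^ 2 := by nlinarith
        push_cast [Nat.cast_sub this, Nat.cast_sub (by omega : 1 ≤ p)]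
        ring

lemma main_bound {μ} (hμ : IsUpperQuasiDensity μ) (s : Finset ℕ) :
    (∀ p ∈ s, Nat.Prime p) → ∀ K h : ℕ, 0 < K → (∀ p ∈ s, ¬ p ∣ K) →
    μ ({x : ℕ | ∃ a n : ℕ, 2 ≤ n ∧ x = a ^ n} ∩ AP K h) ≤
      (∏ p ∈ s, ((p : ℝ) ^ 2 - p + 1) / (p : ℝ) ^ 2) / K := by
  classical
  induction s using Finset.cons_induction with
  | empty =>
      intro _ K h hK _
      rw [Finset.prod_empty]
      exact uqd_subset_AP hμ hK Set.inter_subset_right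
  | cons p s hps ih =>
      intro hprime K h hK hdvd
      have hp : Nat.Prime p := hprime p (Finset.mem_cons_self p s)
      have hpK : ¬ p ∣ K := hdvd p (Finset.mem_cons_self p s)
      have hp2pos : 0 < p ^ 2 := pow_pos hp.pos 2
      set X : Set ℕ := {x : ℕ | ∃ a n : ℕ, 2 ≤ n ∧ x = a ^ n} with hX
      have hdecomp : X ∩ AP K h = ⋃ t ∈ Finset.range (p ^ 2),
          (X ∩ AP (K * p ^ 2) (h + K * t)) := by
        rw [AP_decomp K h (p ^ 2) hp2pos, Set.inter_iUnion₂]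
      have h1 : μ (X ∩ AP K h) ≤
          ∑ t ∈ Finset.range (p ^ 2), μ (X ∩ AP (K * p ^ 2) (h + K * t)) := by
        rw [hdecomp]; exact uqd_biUnion hμ _ _
      set G : ℕ → Prop := fun t => ¬(p ∣ (h + K * t) ∧ ¬ p ^ 2 ∣ (h + K * t)) with hG
      have hsplit := Finset.sum_filter_add_sum_filter_not (Finset.range (p ^ 2)) G
        (fun t => μ (X ∩ AP (K * p ^ 2) (h + K * t)))
      have hbad : ∑ t ∈ (Finset.range (p ^ 2)).filter (fun t => ¬ G t),
          μ (X ∩ AP (K * p ^ 2) (h + K * t)) = 0 := by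
        apply Finset.sum_eq_zero
        intro t ht
        have := (Finset.mem_filter.mp ht).2
        rw [hG] at this
        push_neg at this
        obtain ⟨hd1, hd2⟩ := this
        rw [hX, piece_empty hp hd1 hd2]
        exact uqd_empty hμ
      set B : ℝ := (∏ q ∈ s, ((q : ℝ) ^ 2 - q + 1) / (q : ℝ) ^ 2) / (K * p ^ 2) with hBdef
      have hBnonneg : 0 ≤ B := by
        rw [hBdef]
        apply div_nonneg _ (by positivity)
        apply Finset.prod_nonneg
        intro q _
        apply div_nonneg _ (by positivity)
        nlinarith [sq_nonneg ((q : ℝ) - 1/2)]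
      have hgood : ∀ t ∈ (Finset.range (p ^ 2)).filter G,
          μ (X ∩ AP (K * p ^ 2) (h + K * t)) ≤ B := by
        intro t _
        have hKp : 0 < K * p ^ 2 := by positivity
        have hdvd' : ∀ q ∈ s, ¬ q ∣ K * p ^ 2 := by
          intro q hq hcon
          have hq' : Nat.Prime q := hprime q (Finset.mem_cons_of_mem hq)
          rcases (Nat.Prime.dvd_mul hq').mp hcon with hc | hc
          · exact hdvd q (Finset.mem_cons_of_mem hq) hc
          · have : q = p := (Nat.prime_dvd_prime_iff_eq hq' hp).mp (hq'.dvd_of_dvd_pow hc)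
            exact hps (this ▸ hq)
        have := ih (fun q hq => hprime q (Finset.mem_cons_of_mem hq)) (K * p ^ 2)
          (h + K * t) hKp hdvd'
        rw [hBdef]
        convert this using 3
        push_cast
        ring
      have hsum : ∑ t ∈ (Finset.range (p ^ 2)).filter G,
          μ (X ∩ AP (K * p ^ 2) (h + K * t)) ≤
          (((Finset.range (p ^ 2)).filter G).card : ℝ) * B := by
        have := Finset.sum_le_card_nsmul _ _ B hgood
        rwa [nsmul_eq_mul] at this
      have hcard := card_good (h := h) hp hpK
      have hfinal : μ (X ∩ AP K h) ≤ ((p : ℝ) ^ 2 - p + 1) * B := by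
        have h2 : (((Finset.range (p ^ 2)).filter G).card : ℝ) * B ≤
            ((p : ℝ) ^ 2 - p + 1) * B := by
          apply mul_le_mul_of_nonneg_right _ hBnonneg
          exact hcard
        calc μ (X ∩ AP K h)
            ≤ ∑ t ∈ Finset.range (p ^ 2), μ (X ∩ AP (K * p ^ 2) (h + K * t)) := h1
          _ = ∑ t ∈ (Finset.range (p ^ 2)).filter G,
              μ (X ∩ AP (K * p ^ 2) (h + K * t)) := by rw [← hsplit, hbad, add_zero]
          _ ≤ (((Finset.range (p ^ 2)).filter G).card : ℝ) * B := hsum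
          _ ≤ ((p : ℝ) ^ 2 - p + 1) * B := h2
      refine hfinal.trans (le_of_eq ?_)
      rw [Finset.prod_cons, hBdef]
      have hpR : (0 : ℝ) < (p : ℝ) := by exact_mod_cast hp.pos
      have hKR : (0 : ℝ) < (K : ℝ) := by exact_mod_cast hK
      field_simp

lemma factor_le_exp {p : ℕ} (hp : Nat.Prime p) :
    ((p : ℝ) ^ 2 - p + 1) / (p : ℝ) ^ 2 ≤ Real.exp (-(1 / 2 * (1 / p))) := by
  have hp2 : (2 : ℝ) ≤ (p : ℝ) := by exact_mod_cast hp.two_le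
  have hppos : (0 : ℝ) < p := by linarith
  have e1 : ((p : ℝ) ^ 2 - p + 1) / (p : ℝ) ^ 2 = 1 - ((p : ℝ) - 1) / (p : ℝ) ^ 2 := by
    field_simp
    ring
  have e2 : 1 - ((p : ℝ) - 1) / (p : ℝ) ^ 2 ≤ Real.exp (-(((p : ℝ) - 1) / (p : ℝ) ^ 2)) := by
    have := Real.add_one_le_exp (-(((p : ℝ) - 1) / (p : ℝ) ^ 2))
    linarith
  have e3 : Real.exp (-(((p : ℝ) - 1) / (p : ℝ) ^ 2)) ≤ Real.exp (-(1 / 2 * (1 / p))) := by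
    apply Real.exp_le_exp.mpr
    rw [neg_le_neg_iff, show (1:ℝ)/2 * (1/(p:ℝ)) = 1/(2*(p:ℝ)) by ring,
      div_le_div_iff₀ (by positivity) (by positivity)]
    nlinarith
  rw [e1]; exact e2.trans e3

lemma tendsto_primeprod_zero :
    Tendsto (fun n => ∏ p ∈ Nat.primesBelow n, ((p : ℝ) ^ 2 - p + 1) / (p : ℝ) ^ 2)
      atTop (𝓝 0) := by
  classical
  have hnonneg : ∀ i : ℕ, 0 ≤ Set.indicator {p | Nat.Prime p} (fun n => 1 / (n : ℝ)) i := by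
    intro i
    apply Set.indicator_nonneg
    intro x _
    positivity
  have hS : Tendsto (fun n => ∑ i ∈ Finset.range n,
      Set.indicator {p | Nat.Prime p} (fun n => 1 / (n : ℝ)) i) atTop atTop :=
    (not_summable_iff_tendsto_nat_atTop_of_nonneg hnonneg).mp not_summable_one_div_on_primes
  have hrw : ∀ n, ∑ i ∈ Finset.range n,
      Set.indicator {p | Nat.Prime p} (fun n => 1 / (n : ℝ)) i
      = ∑ p ∈ Nat.primesBelow n, 1 / (p : ℝ) := by
    intro n
    rw [Finset.sum_indicator_eq_sum_filter]
    rfl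
  set S : ℕ → ℝ := fun n => ∑ p ∈ Nat.primesBelow n, 1 / (p : ℝ) with hSdef
  have hS' : Tendsto S atTop atTop := by
    apply hS.congr
    intro n; exact hrw n
  have hub : ∀ n, ∏ p ∈ Nat.primesBelow n, ((p : ℝ) ^ 2 - p + 1) / (p : ℝ) ^ 2
      ≤ Real.exp (-(1 / 2) * S n) := by
    intro n
    have h1 : ∏ p ∈ Nat.primesBelow n, ((p : ℝ) ^ 2 - p + 1) / (p : ℝ) ^ 2
        ≤ ∏ p ∈ Nat.primesBelow n, Real.exp (-(1 / 2 * (1 / p))) := by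
      apply Finset.prod_le_prod
      · intro q _
        apply div_nonneg _ (by positivity)
        nlinarith [sq_nonneg ((q : ℝ) - 1/2)]
      · intro q hq
        exact factor_le_exp (Nat.prime_of_mem_primesBelow hq)
    have h2 : ∏ p ∈ Nat.primesBelow n, Real.exp (-(1 / 2 * (1 / p)))
        = Real.exp (-(1 / 2) * S n) := by
      rw [← Real.exp_sum, hSdef]
      congr 1
      rw [Finset.mul_sum]
      apply Finset.sum_congr rfl
      intro q _
      ring
    exact h1.trans (le_of_eq h2)
  have hlb : ∀ n, 0 ≤ ∏ p ∈ Nat.primesBelow n, ((p : ℝ) ^ 2 - p + 1) / (p : ℝ) ^ 2 := by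
    intro n
    apply Finset.prod_nonneg
    intro q _
    apply div_nonneg _ (by positivity)
    nlinarith [sq_nonneg ((q : ℝ) - 1/2)]
  have hexp : Tendsto (fun n => Real.exp (-(1 / 2) * S n)) atTop (𝓝 0) :=
    Real.tendsto_exp_atBot.comp (hS'.const_mul_atTop_of_neg (by norm_num))
  exact squeeze_zero hlb hub hexp

/-- The set of perfect powers is small. -/
theorem smallSet_perfect_powers :
    SmallSet {x : ℕ | ∃ (a n : ℕ), 2 ≤ n ∧ x = a ^ n} := by
  intro μ hμ
  set X : Set ℕ := {x : ℕ | ∃ (a n : ℕ), 2 ≤ n ∧ x = a ^ n} with hX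
  have hbound : ∀ n : ℕ, μ X ≤ ∏ p ∈ Nat.primesBelow n, ((p : ℝ) ^ 2 - p + 1) / (p : ℝ) ^ 2 := by
    intro n
    have := main_bound hμ (Nat.primesBelow n)
      (fun p hp => Nat.prime_of_mem_primesBelow hp) 1 0 one_pos
      (fun p hp hd => by
        have h1 : p = 1 := Nat.dvd_one.mp hd
        have := (Nat.prime_of_mem_primesBelow hp).one_lt
        omega)
    rw [AP_one_zero, Set.inter_univ, Nat.cast_one, div_one] at this
    exact this
  have h0 : μ X ≤ 0 := ge_of_tendsto' tendsto_primeprod_zero hbound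
  have h1 : 0 ≤ μ X := uqd_nonneg hμ X
  linarith
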